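/- Let (C, d, U, D₁, D₂) and (C′, d′, U′, D₁′, D₂′) be Floer data over a field Λ, let (c, φ, μ, Δ₁, Δ₂) be a cobordism datum between them, and let ĈW : Ĉ → Ĉ′ be as defined in the context. Then ĈW is a chain map: d̂′ ∘ ĈW = ĈW ∘ d̂. -/

import Mathlib

noncomputable section

variable (Λ : Type*) (V : Type*) [Field Λ] [AddCommGroup V] [Module Λ V]

/-- A Floer datum over the field `Λ`. -/
structure FloerDatum where
  gr : ZMod 8 → Submodule Λ V
  internal : DirectSum.IsInternal gr
  d : V →ₗ[Λ] V
  U : V →ₗ[Λ] V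
  D₁ : V →ₗ[Λ] Λ
  D₂ : Λ →ₗ[Λ] V
  d_mem : ∀ (i : ZMod 8), ∀ v ∈ gr i, d v ∈ gr (i - 1)
  U_mem : ∀ (i : ZMod 8), ∀ v ∈ gr i, U v ∈ gr (i - 4)
  D₁_vanish : ∀ (i : ZMod 8), i ≠ 1 → ∀ v ∈ gr i, D₁ v = 0
  D₂_mem : ∀ a : Λ, D₂ a ∈ gr 4
  d_d : d ∘ₗ d = 0
  D₁_d : D₁ ∘ₗ d = 0
  d_D₂ : d ∘ₗ D₂ = 0
  U_rel : U ∘ₗ d - d ∘ₗ U + D₂ ∘ₗ D₁ = 0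

variable (V' : Type*) [AddCommGroup V'] [Module Λ V']
variable {Λ V V'}

/-- A cobordism datum between two Floer data. -/
structure CobordismDatum (F : FloerDatum Λ V) (F' : FloerDatum Λ V') where
  c : Λ
  φ : V →ₗ[Λ] V'
  μ : V →ₗ[Λ] V'
  Δ₁ : V →ₗ[Λ] Λ
  Δ₂ : Λ →ₗ[Λ] V'
  φ_mem : ∀ (i : ZMod 8), ∀ v ∈ F.gr i, φ v ∈ F'.gr i
  μ_mem : ∀ (i : ZMod 8), ∀ v ∈ F.gr i, μ v ∈ F'.gr (i - 3)
  Δ₁_vanish : ∀ (i : ZMod 8), i ≠ 0 → ∀ v ∈ F.gr i, Δ₁ v = 0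
  Δ₂_mem : ∀ a : Λ, Δ₂ a ∈ F'.gr 5
  rel_d : φ ∘ₗ F.d = F'.d ∘ₗ φ
  rel_D₁ : Δ₁ ∘ₗ F.d + c • F.D₁ = F'.D₁ ∘ₗ φ
  rel_D₂ : φ ∘ₗ F.D₂ = c • F'.D₂ - F'.d ∘ₗ Δ₂
  rel_U : μ ∘ₗ F.d + F'.d ∘ₗ μ + Δ₂ ∘ₗ F.D₁ + φ ∘ₗ F.U - F'.U ∘ₗ φ - F'.D₂ ∘ₗ Δ₁ = 0

variable {W : Type*} [AddCommGroup W] [Module Λ W]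
variable {M : Type*} [AddCommGroup M] [Module Λ M]

/-- `p = Σ aᵢ xⁱ ↦ Σ f i aᵢ`, as a linear map on polynomials. -/
def polySum (f : ℕ → (Λ →ₗ[Λ] W)) : Polynomial Λ →ₗ[Λ] W where
  toFun p := p.sum fun i a => f i a
  map_add' p q :=
    Polynomial.sum_add_index p q _ (fun i => map_zero (f i)) (fun i b c => map_add (f i) b c)
  map_smul' a p := by
    show (a • p).sum (fun i b => f i b) = a • p.sum fun i b => f i b
    rw [Polynomial.sum_smul_index p a _ (fun i => map_zero (f i)),
      Polynomial.sum, Polynomial.sum, Finset.smul_sum]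
    exact Finset.sum_congr rfl fun n _ => by rw [← smul_eq_mul, map_smul]

/-- The differential `d̂` on `Ĉ = C ⊕ Λ[x]`. -/
def hatd (F : FloerDatum Λ V) : (V × Polynomial Λ) →ₗ[Λ] (V × Polynomial Λ) :=
  ((F.d ∘ₗ LinearMap.fst Λ V (Polynomial Λ))
    - (polySum fun i => (F.U ^ i) ∘ₗ F.D₂) ∘ₗ LinearMap.snd Λ V (Polynomial Λ)).prod 0

/-- The map `X̂(α, p) = (U α, D₁ α + x·p)` on `Ĉ`. -/
def hatX (F : FloerDatum Λ V) : (V × Polynomial Λ) →ₗ[Λ] (V × Polynomial Λ) :=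
  (F.U ∘ₗ LinearMap.fst Λ V (Polynomial Λ)).prod
    ((Algebra.linearMap Λ (Polynomial Λ)) ∘ₗ F.D₁ ∘ₗ LinearMap.fst Λ V (Polynomial Λ)
      + (LinearMap.mulLeft Λ (Polynomial.X : Polynomial Λ)) ∘ₗ LinearMap.snd Λ V (Polynomial Λ))

/-- The cobordism map `ĈW : Ĉ → Ĉ′`. -/
def hatCW {F : FloerDatum Λ V} {F' : FloerDatum Λ V'} (G : CobordismDatum F F') :
    (V × Polynomial Λ) →ₗ[Λ] (V' × Polynomial Λ) :=
  (G.φ ∘ₗ LinearMap.fst Λ V (Polynomial Λ)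
    + (polySum fun i => (F'.U ^ i) ∘ₗ G.Δ₂
        + ∑ k ∈ Finset.range i, (F'.U ^ k) ∘ₗ G.μ ∘ₗ (F.U ^ (i - 1 - k)) ∘ₗ F.D₂)
        ∘ₗ LinearMap.snd Λ V (Polynomial Λ)).prod
  (G.c • LinearMap.snd Λ V (Polynomial Λ)
    + (polySum fun k =>
        (∑ i ∈ Finset.range k,
          (LinearMap.smulRight (F'.D₁ ∘ₗ (F'.U ^ (k - 1 - i)) ∘ₗ G.Δ₂)
              ((Polynomial.X : Polynomial Λ) ^ i)
            + LinearMap.smulRight (G.Δ₁ ∘ₗ (F.U ^ (k - 1 - i)) ∘ₗ F.D₂)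
              ((Polynomial.X : Polynomial Λ) ^ i)))
        + ∑ j ∈ Finset.range k, ∑ i ∈ Finset.range j,
            LinearMap.smulRight
              (F'.D₁ ∘ₗ (F'.U ^ (j - i - 1)) ∘ₗ G.μ ∘ₗ (F.U ^ (k - j - 1)) ∘ₗ F.D₂)
              ((Polynomial.X : Polynomial Λ) ^ i))
      ∘ₗ LinearMap.snd Λ V (Polynomial Λ))

section ChainAux

open Polynomial LinearMap

variable {N : Type*} [AddCommGroup N] [Module Λ N]

lemma polySum_monomial (f : ℕ → (Λ →ₗ[Λ] W)) (n : ℕ) (a : Λ) :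
    polySum f ((Polynomial.monomial n) a) = f n a := by
  show ((Polynomial.monomial n) a).sum (fun i b => f i b) = f n a
  exact Polynomial.sum_monomial_index a _ (map_zero _)

lemma comp_polySum (g : W →ₗ[Λ] M) (f : ℕ → (Λ →ₗ[Λ] W)) :
    g ∘ₗ polySum f = polySum fun i => g ∘ₗ f i := by
  apply Polynomial.lhom_ext'
  intro n; ext a
  simp [polySum_monomial]

lemma polySum_comp_mulLeftX (f : ℕ → (Λ →ₗ[Λ] W)) :
    polySum f ∘ₗ LinearMap.mulLeft Λ (Polynomial.X : Polynomial Λ)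
      = polySum fun i => f (i + 1) := by
  apply Polynomial.lhom_ext'
  intro n; ext a
  simp [polySum_monomial, Polynomial.X_mul_monomial]

lemma polySum_comp_C (f : ℕ → (Λ →ₗ[Λ] W)) :
    polySum f ∘ₗ Algebra.linearMap Λ (Polynomial Λ) = f 0 := by
  ext a
  simp only [LinearMap.comp_apply, Algebra.linearMap_apply, Polynomial.algebraMap_eq,
    ← Polynomial.monomial_zero_left, polySum_monomial]

lemma comp_finset_sum {ι : Type*} (g : W →ₗ[Λ] M) (s : Finset ι) (f : ι → (N →ₗ[Λ] W)) :
    g ∘ₗ (∑ i ∈ s, f i) = ∑ i ∈ s, g ∘ₗ f i := by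
  ext a
  simp

lemma sum_smulRight {ι : Type*} (s : Finset ι) (h : ι → (N →ₗ[Λ] Λ)) (p : Polynomial Λ) :
    LinearMap.smulRight (∑ i ∈ s, h i) p = ∑ i ∈ s, LinearMap.smulRight (h i) p := by
  ext a
  simp [Finset.sum_smul]

lemma add_smulRight (h₁ h₂ : N →ₗ[Λ] Λ) (p : Polynomial Λ) :
    LinearMap.smulRight (h₁ + h₂) p
      = LinearMap.smulRight h₁ p + LinearMap.smulRight h₂ p := by
  ext a
  simp [add_smul]

lemma mulLeft_comp_smulRight (h : N →ₗ[Λ] Λ) (q p : Polynomial Λ) :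
    LinearMap.mulLeft Λ q ∘ₗ LinearMap.smulRight h p = LinearMap.smulRight h (q * p) := by
  ext a
  simp [mul_smul_comm]

lemma C_comp_scalar (h : N →ₗ[Λ] Λ) :
    Algebra.linearMap Λ (Polynomial Λ) ∘ₗ h = LinearMap.smulRight h 1 := by
  ext a
  simp only [LinearMap.comp_apply, Algebra.linearMap_apply, LinearMap.smulRight_apply,
    Algebra.algebraMap_eq_smul_one]

lemma UD₂_mem (F : FloerDatum Λ V) (n : ℕ) (a : Λ) :
    (F.U ^ n) (F.D₂ a) ∈ F.gr (4 - 4 * (n : ZMod 8)) := by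
  induction n with
  | zero => simpa using F.D₂_mem a
  | succ n ih =>
    have e : (4 : ZMod 8) - 4 * ((n + 1 : ℕ) : ZMod 8)
        = ((4 : ZMod 8) - 4 * ((n : ℕ) : ZMod 8)) - 4 := by push_cast; ring
    rw [e, pow_succ', Module.End.mul_apply]
    exact F.U_mem _ _ ih

lemma D₁_UD₂ (F : FloerDatum Λ V) (n : ℕ) (a : Λ) :
    F.D₁ ((F.U ^ n) (F.D₂ a)) = 0 := by
  refine F.D₁_vanish _ ?_ _ (UD₂_mem F n a)
  have h : ∀ z : ZMod 8, 4 - 4 * z ≠ 1 := by decide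
  exact h _

lemma d_UD₂ (F : FloerDatum Λ V) (n : ℕ) (a : Λ) :
    F.d ((F.U ^ n) (F.D₂ a)) = 0 := by
  induction n with
  | zero => simpa using LinearMap.congr_fun F.d_D₂ a
  | succ n ih =>
    rw [pow_succ', Module.End.mul_apply]
    have h := LinearMap.congr_fun F.U_rel ((F.U ^ n) (F.D₂ a))
    simp only [LinearMap.add_apply, LinearMap.sub_apply, LinearMap.comp_apply,
      LinearMap.zero_apply, ih, D₁_UD₂, map_zero] at h
    simpa using h

/-- The coefficient maps of the polynomial part of `d̂`. -/
def fS (F : FloerDatum Λ V) : ℕ → (Λ →ₗ[Λ] V) := fun i => (F.U ^ i) ∘ₗ F.D₂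

variable {F : FloerDatum Λ V} {F' : FloerDatum Λ V'}

/-- The coefficient maps of the first component of `ĈW`. -/
def fT (G : CobordismDatum F F') : ℕ → (Λ →ₗ[Λ] V') := fun i =>
  (F'.U ^ i) ∘ₗ G.Δ₂
    + ∑ k ∈ Finset.range i, (F'.U ^ k) ∘ₗ G.μ ∘ₗ (F.U ^ (i - 1 - k)) ∘ₗ F.D₂

/-- The coefficient maps of the second component of `ĈW`. -/
def fQ (G : CobordismDatum F F') : ℕ → (Λ →ₗ[Λ] Polynomial Λ) := fun k =>
  (∑ i ∈ Finset.range k,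
    (LinearMap.smulRight (F'.D₁ ∘ₗ (F'.U ^ (k - 1 - i)) ∘ₗ G.Δ₂)
        ((Polynomial.X : Polynomial Λ) ^ i)
      + LinearMap.smulRight (G.Δ₁ ∘ₗ (F.U ^ (k - 1 - i)) ∘ₗ F.D₂)
        ((Polynomial.X : Polynomial Λ) ^ i)))
  + ∑ j ∈ Finset.range k, ∑ i ∈ Finset.range j,
      LinearMap.smulRight
        (F'.D₁ ∘ₗ (F'.U ^ (j - i - 1)) ∘ₗ G.μ ∘ₗ (F.U ^ (k - j - 1)) ∘ₗ F.D₂)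
        ((Polynomial.X : Polynomial Λ) ^ i)

lemma hatd_eq (F : FloerDatum Λ V) :
    hatd F = ((F.d ∘ₗ LinearMap.fst Λ V (Polynomial Λ))
      - polySum (fS F) ∘ₗ LinearMap.snd Λ V (Polynomial Λ)).prod 0 := rfl

lemma hatCW_eq (G : CobordismDatum F F') :
    hatCW G = (G.φ ∘ₗ LinearMap.fst Λ V (Polynomial Λ)
        + polySum (fT G) ∘ₗ LinearMap.snd Λ V (Polynomial Λ)).prod
      (G.c • LinearMap.snd Λ V (Polynomial Λ)
        + polySum (fQ G) ∘ₗ LinearMap.snd Λ V (Polynomial Λ)) := rfl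

lemma fS_succ (F : FloerDatum Λ V) (n : ℕ) : fS F (n + 1) = F.U ∘ₗ fS F n := by
  unfold fS
  rw [pow_succ', Module.End.mul_eq_comp, LinearMap.comp_assoc]

lemma fS_zero (F : FloerDatum Λ V) : fS F 0 = F.D₂ := by
  unfold fS
  rw [pow_zero, Module.End.one_eq_id, LinearMap.id_comp]

lemma fT_succ (G : CobordismDatum F F') (n : ℕ) :
    fT G (n + 1) = F'.U ∘ₗ fT G n + G.μ ∘ₗ fS F n := by
  unfold fT fS
  rw [LinearMap.comp_add, comp_finset_sum, Finset.sum_range_succ']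
  rw [Finset.sum_congr rfl (fun k (hk : k ∈ Finset.range n) => show
      (F'.U ^ (k + 1)) ∘ₗ G.μ ∘ₗ (F.U ^ (n + 1 - 1 - (k + 1))) ∘ₗ F.D₂
        = F'.U ∘ₗ ((F'.U ^ k) ∘ₗ G.μ ∘ₗ (F.U ^ (n - 1 - k)) ∘ₗ F.D₂) from by
    rw [show n + 1 - 1 - (k + 1) = n - 1 - k from by omega, pow_succ', Module.End.mul_eq_comp,
      LinearMap.comp_assoc])]
  rw [show (F'.U ^ 0) ∘ₗ G.μ ∘ₗ (F.U ^ (n + 1 - 1 - 0)) ∘ₗ F.D₂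
      = G.μ ∘ₗ (F.U ^ n) ∘ₗ F.D₂ from by
    rw [show n + 1 - 1 - 0 = n from by omega, pow_zero, Module.End.one_eq_id, LinearMap.id_comp]]
  rw [pow_succ', Module.End.mul_eq_comp, LinearMap.comp_assoc]
  abel

set_option maxHeartbeats 1000000 in
lemma fQ_succ (G : CobordismDatum F F') (n : ℕ) :
    fQ G (n + 1) = LinearMap.mulLeft Λ (Polynomial.X : Polynomial Λ) ∘ₗ fQ G n
      + Algebra.linearMap Λ (Polynomial Λ) ∘ₗ
          (F'.D₁ ∘ₗ fT G n + G.Δ₁ ∘ₗ fS F n) := by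
  unfold fQ fT fS
  simp only [Finset.sum_range_succ', Finset.sum_range_zero, add_zero, pow_zero]
  rw [Finset.sum_congr rfl (fun i (hi : i ∈ Finset.range n) => show
      LinearMap.smulRight (F'.D₁ ∘ₗ (F'.U ^ (n + 1 - 1 - (i + 1))) ∘ₗ G.Δ₂)
          ((Polynomial.X : Polynomial Λ) ^ (i + 1))
        + LinearMap.smulRight (G.Δ₁ ∘ₗ (F.U ^ (n + 1 - 1 - (i + 1))) ∘ₗ F.D₂)
          ((Polynomial.X : Polynomial Λ) ^ (i + 1))
      = LinearMap.smulRight (F'.D₁ ∘ₗ (F'.U ^ (n - 1 - i)) ∘ₗ G.Δ₂)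
          ((Polynomial.X : Polynomial Λ) ^ (i + 1))
        + LinearMap.smulRight (G.Δ₁ ∘ₗ (F.U ^ (n - 1 - i)) ∘ₗ F.D₂)
          ((Polynomial.X : Polynomial Λ) ^ (i + 1)) from by
    rw [show n + 1 - 1 - (i + 1) = n - 1 - i from by omega])]
  rw [show n + 1 - 1 - 0 = n from by omega]
  rw [Finset.sum_congr rfl (fun j (hj : j ∈ Finset.range n) => show
      (∑ i ∈ Finset.range j,
          LinearMap.smulRight
            (F'.D₁ ∘ₗ (F'.U ^ (j + 1 - (i + 1) - 1)) ∘ₗ G.μ ∘ₗ (F.U ^ (n + 1 - (j + 1) - 1)) ∘ₗ F.D₂)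
            ((Polynomial.X : Polynomial Λ) ^ (i + 1)))
        + LinearMap.smulRight
            (F'.D₁ ∘ₗ (F'.U ^ (j + 1 - 0 - 1)) ∘ₗ G.μ ∘ₗ (F.U ^ (n + 1 - (j + 1) - 1)) ∘ₗ F.D₂) 1
      = (∑ i ∈ Finset.range j,
          LinearMap.smulRight
            (F'.D₁ ∘ₗ (F'.U ^ (j - i - 1)) ∘ₗ G.μ ∘ₗ (F.U ^ (n - j - 1)) ∘ₗ F.D₂)
            ((Polynomial.X : Polynomial Λ) ^ (i + 1)))
        + LinearMap.smulRight
            (F'.D₁ ∘ₗ (F'.U ^ j) ∘ₗ G.μ ∘ₗ (F.U ^ (n - 1 - j)) ∘ₗ F.D₂) 1 from by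
    congr 1
    · exact Finset.sum_congr rfl fun i hi => by
        rw [show j + 1 - (i + 1) - 1 = j - i - 1 from by omega,
          show n + 1 - (j + 1) - 1 = n - j - 1 from by omega]
    · rw [show j + 1 - 0 - 1 = j from by omega,
        show n + 1 - (j + 1) - 1 = n - 1 - j from by omega])]
  simp only [LinearMap.comp_add, comp_finset_sum, C_comp_scalar, add_smulRight, sum_smulRight,
    mulLeft_comp_smulRight, ← pow_succ']
  simp only [Finset.sum_add_distrib]
  abel

lemma main (G : CobordismDatum F F') (n : ℕ) :
    F'.d ∘ₗ fT G n + G.φ ∘ₗ fS F n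
      = G.c • fS F' n + polySum (fS F') ∘ₗ fQ G n := by
  induction n with
  | zero =>
    rw [fS_zero, fS_zero]
    unfold fT fQ
    simp only [Finset.sum_range_zero, pow_zero, add_zero, zero_add, Module.End.one_eq_id,
      LinearMap.id_comp, LinearMap.comp_zero]
    linear_combination (norm := module) G.rel_D₂
  | succ n ih =>
    have hd0 : F.d ∘ₗ fS F n = 0 := by
      refine LinearMap.ext fun a => ?_
      simpa [fS] using d_UD₂ F n a
    have hD₁0 : F.D₁ ∘ₗ fS F n = 0 := by
      refine LinearMap.ext fun a => ?_
      simpa [fS] using D₁_UD₂ F n a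
    have hdU' : F'.d ∘ₗ F'.U = F'.U ∘ₗ F'.d + F'.D₂ ∘ₗ F'.D₁ := by
      linear_combination (norm := module) -F'.U_rel
    have hφU : G.φ ∘ₗ F.U
        = F'.U ∘ₗ G.φ + F'.D₂ ∘ₗ G.Δ₁ - G.μ ∘ₗ F.d - F'.d ∘ₗ G.μ - G.Δ₂ ∘ₗ F.D₁ := by
      linear_combination (norm := module) G.rel_U
    have hSX : polySum (fS F') ∘ₗ (LinearMap.mulLeft Λ (Polynomial.X : Polynomial Λ) ∘ₗ fQ G n)
        = F'.U ∘ₗ polySum (fS F') ∘ₗ fQ G n := by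
      rw [← LinearMap.comp_assoc, polySum_comp_mulLeftX]
      rw [show (fun i => fS F' (i + 1)) = fun i => F'.U ∘ₗ fS F' i from
        funext fun i => fS_succ F' i]
      rw [← comp_polySum F'.U (fS F'), LinearMap.comp_assoc]
    have hSC : polySum (fS F') ∘ₗ (Algebra.linearMap Λ (Polynomial Λ) ∘ₗ
          (F'.D₁ ∘ₗ fT G n + G.Δ₁ ∘ₗ fS F n))
        = F'.D₂ ∘ₗ (F'.D₁ ∘ₗ fT G n + G.Δ₁ ∘ₗ fS F n) := by
      rw [← LinearMap.comp_assoc, polySum_comp_C, fS_zero]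
    have h1 : F'.U ∘ₗ (F'.d ∘ₗ fT G n + G.φ ∘ₗ fS F n)
        = F'.U ∘ₗ (G.c • fS F' n + polySum (fS F') ∘ₗ fQ G n) := by rw [ih]
    have h2 : (F'.d ∘ₗ F'.U) ∘ₗ fT G n
        = (F'.U ∘ₗ F'.d + F'.D₂ ∘ₗ F'.D₁) ∘ₗ fT G n := by rw [hdU']
    have h3 : (G.φ ∘ₗ F.U) ∘ₗ fS F n
        = (F'.U ∘ₗ G.φ + F'.D₂ ∘ₗ G.Δ₁ - G.μ ∘ₗ F.d - F'.d ∘ₗ G.μ - G.Δ₂ ∘ₗ F.D₁)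
            ∘ₗ fS F n := by rw [hφU]
    have h4 : G.μ ∘ₗ (F.d ∘ₗ fS F n) = 0 := by rw [hd0, LinearMap.comp_zero]
    have h5 : G.Δ₂ ∘ₗ (F.D₁ ∘ₗ fS F n) = 0 := by rw [hD₁0, LinearMap.comp_zero]
    rw [fQ_succ, LinearMap.comp_add, hSX, hSC, fT_succ, fS_succ F, fS_succ F']
    simp only [LinearMap.comp_add, LinearMap.add_comp, LinearMap.comp_sub, LinearMap.sub_comp,
      LinearMap.comp_smul, LinearMap.smul_comp, LinearMap.comp_assoc] at h1 h2 h3 ⊢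
    linear_combination (norm := module) h1 + h2 + h3 - h4 - h5

lemma claim (G : CobordismDatum F F') :
    F'.d ∘ₗ polySum (fT G) + G.φ ∘ₗ polySum (fS F)
      = G.c • polySum (fS F') + polySum (fS F') ∘ₗ polySum (fQ G) := by
  apply Polynomial.lhom_ext'
  intro n
  refine LinearMap.ext fun a => ?_
  have h := LinearMap.congr_fun (main G n) a
  simp only [LinearMap.add_apply, LinearMap.comp_apply, LinearMap.smul_apply] at h
  simp only [LinearMap.comp_apply, LinearMap.add_apply, LinearMap.smul_apply,
    polySum_monomial]
  exact h

end ChainAux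

/-- The cobordism map `ĈW` is a chain map: `d̂′ ∘ ĈW = ĈW ∘ d̂`. -/
theorem stmt_8 {F : FloerDatum Λ V} {F' : FloerDatum Λ V'} (G : CobordismDatum F F') :
    hatd F' ∘ₗ hatCW G = hatCW G ∘ₗ hatd F := by
  apply LinearMap.ext
  rintro ⟨α, p⟩
  have h1 := LinearMap.congr_fun G.rel_d α
  have h2 := LinearMap.congr_fun (claim G) p
  simp only [LinearMap.comp_apply, LinearMap.add_apply, LinearMap.smul_apply] at h1 h2
  rw [hatd_eq F, hatd_eq F', hatCW_eq]
  simp only [LinearMap.comp_apply, LinearMap.prod_apply, Function.prod, LinearMap.add_apply,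
    LinearMap.sub_apply, LinearMap.fst_apply, LinearMap.snd_apply, LinearMap.smul_apply,
    LinearMap.zero_apply, map_add, map_sub, map_zero, map_smul, smul_zero, add_zero, zero_add]
  refine Prod.ext ?_ ?_
  · linear_combination (norm := module) h2 - h1
  · simp
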